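/- With a := d‖x̃‖₂² − ‖x̃‖₁² > 0, b := dλ₂² − λ₁² > 0, and α(x̃) := (1/d)(‖x̃‖₁ − λ₁√(a/b)) viewed as a function of x̃ ∈ ℝ_{>0}^d (entries not all equal), the gradient of α with respect to x̃ equals (λ₂²/b)·ẽᵀ − (λ₁/√(ab))·q̃ᵀ, where q̃ := x̃ − α·ẽ and ẽ is the all-ones vector. -/

import Mathlib

private lemma stmt_17_alg (a b lam1 lam2 L S P : ℝ) (dd : ℝ) (hd : 0 < dd)
    (hapos : 0 < a) (hbpos : 0 < b) (hb : b = dd * lam2 ^ 2 - lam1 ^ 2) :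
    1/dd * (L - lam1 * (1/(2*Real.sqrt (a*b⁻¹)) * (b⁻¹ * (dd*(2*P) - (S*L + S*L)))))
      = lam2^2/b * L - lam1/Real.sqrt (a*b) * (P - 1/dd*(S - lam1*Real.sqrt (a/b))*L) := by
  have hs2 : Real.sqrt a ^ 2 = a := Real.sq_sqrt hapos.le
  have ht2 : Real.sqrt b ^ 2 = b := Real.sq_sqrt hbpos.le
  have hspos : 0 < Real.sqrt a := Real.sqrt_pos.mpr hapos
  have htpos : 0 < Real.sqrt b := Real.sqrt_pos.mpr hbpos
  set s := Real.sqrt a with hsdef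
  set t := Real.sqrt b with htdef
  have hab : Real.sqrt (a * b) = s * t := Real.sqrt_mul hapos.le b
  have habinv : Real.sqrt (a * b⁻¹) = s * t⁻¹ := by
    rw [Real.sqrt_mul hapos.le, Real.sqrt_inv]
  have habdiv : Real.sqrt (a / b) = s * t⁻¹ := by
    rw [div_eq_mul_inv]; exact habinv
  rw [hab, habinv, habdiv, ← ht2]
  have hbt : dd * lam2 ^ 2 = t^2 + lam1^2 := by rw [ht2, hb]; ring
  have hs0 := hspos.ne'
  have ht0 := htpos.ne'
  have hd0 := hd.ne'
  field_simp
  ring_nf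
  linear_combination (-2*L*s) * hbt

theorem stmt_17 {d : ℕ} (hd : 2 ≤ d)
    (lam1 lam2 : ℝ) (h1 : 0 < lam1) (h2 : 0 < lam2) (hlt : lam1 ^ 2 < d * lam2 ^ 2)
    (b : ℝ) (hb : b = d * lam2 ^ 2 - lam1 ^ 2)
    (A : (Fin d → ℝ) → ℝ) (hA : ∀ v, A v = d * (∑ i, (v i) ^ 2) - (∑ i, v i) ^ 2)
    (αf : (Fin d → ℝ) → ℝ)
    (hαf : ∀ v, αf v = (1 / d) * ((∑ i, v i) - lam1 * Real.sqrt (A v / b)))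
    (x : Fin d → ℝ) (hxpos : ∀ i, 0 < x i) (hne : ∃ i j, x i ≠ x j)
    (a : ℝ) (ha : a = A x)
    (q : Fin d → ℝ) (hq : ∀ i, q i = x i - αf x) :
    DifferentiableAt ℝ αf x ∧
    ∀ y : Fin d → ℝ,
      fderiv ℝ αf x y
        = (lam2 ^ 2 / b) * (∑ i, y i) - (lam1 / Real.sqrt (a * b)) * (∑ i, q i * y i) := by
  have hdpos : (0:ℝ) < (d:ℝ) := by
    have : (0:ℕ) < d := by omega
    exact_mod_cast this
  have hbpos : 0 < b := by rw [hb]; linarith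
  have hapos : 0 < a := by
    obtain ⟨i, j, hij⟩ := hne
    have key : ∑ p : Fin d, ∑ r : Fin d, (x p - x r)^2
        = 2 * ((d:ℝ) * (∑ i, (x i)^2) - (∑ i, x i)^2) := by
      simp only [sub_sq, Finset.sum_add_distrib, Finset.sum_sub_distrib, Finset.sum_const,
        Finset.card_univ, Fintype.card_fin, nsmul_eq_mul, ← Finset.mul_sum, ← Finset.sum_mul]
      ring
    have hsq : 0 < (x i - x j)^2 := by
      have h := sub_ne_zero.mpr hij
      positivity
    have h1 : 0 < ∑ p : Fin d, ∑ r : Fin d, (x p - x r)^2 :=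
      Finset.sum_pos' (fun _ _ => Finset.sum_nonneg fun _ _ => sq_nonneg _)
        ⟨i, Finset.mem_univ _, Finset.sum_pos' (fun _ _ => sq_nonneg _)
          ⟨j, Finset.mem_univ _, hsq⟩⟩
    have hval : a = (d:ℝ) * (∑ i, (x i)^2) - (∑ i, x i)^2 := by rw [ha, hA]
    nlinarith
  have haa : a = (d:ℝ) * (∑ i, (x i)^2) - (∑ i, x i)^2 := by rw [ha, hA]
  -- rewrite αf as an explicit function
  have hfun : αf = fun v : Fin d → ℝ =>
      (1/(d:ℝ)) * ((∑ i, v i) - lam1 * Real.sqrt (((d:ℝ) * (∑ i, v i ^ 2) - (∑ i, v i)^2) * b⁻¹)) := by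
    funext v
    rw [hαf, hA, div_eq_mul_inv _ b]
  -- derivative construction
  have hS : HasFDerivAt (fun v : Fin d → ℝ => ∑ i, v i)
      ((∑ i, ContinuousLinearMap.proj i : (Fin d → ℝ) →L[ℝ] ℝ)) x :=
    HasFDerivAt.fun_sum fun i _ => hasFDerivAt_apply (𝕜 := ℝ) i x
  have hsq : ∀ i : Fin d, HasFDerivAt (fun v : Fin d → ℝ => v i ^ 2)
      (x i • (ContinuousLinearMap.proj i : (Fin d → ℝ) →L[ℝ] ℝ)
        + x i • (ContinuousLinearMap.proj i : (Fin d → ℝ) →L[ℝ] ℝ)) x := fun i => by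
    simpa [pow_two] using (hasFDerivAt_apply (𝕜 := ℝ) i x).fun_mul (hasFDerivAt_apply (𝕜 := ℝ) i x)
  have hQ : HasFDerivAt (fun v : Fin d → ℝ => ∑ i, v i ^ 2)
      (∑ i, (x i • (ContinuousLinearMap.proj i : (Fin d → ℝ) →L[ℝ] ℝ)
        + x i • (ContinuousLinearMap.proj i : (Fin d → ℝ) →L[ℝ] ℝ))) x :=
    HasFDerivAt.fun_sum fun i _ => hsq i
  have hSsq : HasFDerivAt (fun v : Fin d → ℝ => (∑ i, v i)^2)
      ((∑ i, x i) • ((∑ i, ContinuousLinearMap.proj i : (Fin d → ℝ) →L[ℝ] ℝ))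
        + (∑ i, x i) • ((∑ i, ContinuousLinearMap.proj i : (Fin d → ℝ) →L[ℝ] ℝ))) x := by
    simpa [pow_two] using hS.fun_mul hS
  have hA2 := (hQ.const_mul (d:ℝ)).sub hSsq
  have hAb := hA2.mul_const b⁻¹
  have hne0 : ((d:ℝ) * (∑ i, (x i)^2) - (∑ i, x i)^2) * b⁻¹ ≠ 0 := by
    rw [← haa]; positivity
  have hsqrt := (Real.hasDerivAt_sqrt hne0).comp_hasFDerivAt (𝕜 := ℝ) x hAb
  have hsqrt' : HasFDerivAt (fun v : Fin d → ℝ =>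
      Real.sqrt (((d:ℝ) * (∑ i, v i ^ 2) - (∑ i, v i)^2) * b⁻¹))
      ((1/(2*Real.sqrt (((d:ℝ) * (∑ i, (x i)^2) - (∑ i, x i)^2) * b⁻¹))) • (b⁻¹ •
        ((d:ℝ) • (∑ i, (x i • (ContinuousLinearMap.proj i : (Fin d → ℝ) →L[ℝ] ℝ)
          + x i • (ContinuousLinearMap.proj i : (Fin d → ℝ) →L[ℝ] ℝ)))
         - ((∑ i, x i) • ((∑ i, ContinuousLinearMap.proj i : (Fin d → ℝ) →L[ℝ] ℝ))
        + (∑ i, x i) • ((∑ i, ContinuousLinearMap.proj i : (Fin d → ℝ) →L[ℝ] ℝ)))))) x := hsqrt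
  have hF := (hS.fun_sub (hsqrt'.const_mul lam1)).const_mul (1/(d:ℝ))
  rw [hfun]
  refine ⟨hF.differentiableAt, fun y => ?_⟩
  have heval := congrArg (fun (L : (Fin d → ℝ) →L[ℝ] ℝ) => L y) hF.fderiv
  simp only [ContinuousLinearMap.smul_apply, ContinuousLinearMap.sub_apply,
    ContinuousLinearMap.add_apply, ContinuousLinearMap.coe_sum', Finset.sum_apply,
    ContinuousLinearMap.proj_apply, smul_eq_mul] at heval
  rw [heval]
  have hqsum : ∑ i, q i * y i = (∑ i, x i * y i) - αf x * (∑ i, y i) := by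
    simp only [hq, sub_mul, Finset.sum_sub_distrib, ← Finset.mul_sum]
  have h2P : ∑ i, (x i * y i + x i * y i) = 2 * ∑ i, x i * y i := by
    rw [Finset.sum_add_distrib]; ring
  rw [hqsum, hαf, hA, ← haa, h2P]
  exact stmt_17_alg a b lam1 lam2 (∑ i, y i) (∑ i, x i) (∑ i, x i * y i) (d:ℝ)
    hdpos hapos hbpos hb
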